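/- For p > 1 and any C¹ path 𝐳: [0,1] → ℝ^n from 𝐱 to 𝐲 with velocity 𝐯, (∫₀¹ ‖𝐯(t)‖_tr^p dt)^{1/p} ≥ d_tr(𝐱, 𝐲), with equality achieved by the straight-line path; hence the infimum of (∫₀¹ ‖𝐯(t)‖_tr^p dt)^{1/p} over such paths is d_tr(𝐱, 𝐲). -/

import Mathlib

noncomputable def tropNorm {n : ℕ} (a : Fin n → ℝ) : ℝ :=
  Finset.fold max 0 a Finset.univ - Finset.fold min 0 a Finset.univ

open Finset MeasureTheory Set

section aux

variable {n : ℕ}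

lemma fold_max_nonneg (a : Fin n → ℝ) : (0:ℝ) ≤ Finset.fold max 0 a Finset.univ :=
  (Finset.le_fold_max _).2 (Or.inl le_rfl)

lemma fold_min_nonpos (a : Fin n → ℝ) : Finset.fold min 0 a Finset.univ ≤ 0 :=
  (Finset.fold_min_le _).2 (Or.inl le_rfl)

lemma apply_le_fold_max (a : Fin n → ℝ) (i : Fin n) :
    a i ≤ Finset.fold max 0 a Finset.univ :=
  (Finset.le_fold_max _).2 (Or.inr ⟨i, Finset.mem_univ i, le_rfl⟩)

lemma fold_min_le_apply (a : Fin n → ℝ) (i : Fin n) :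
    Finset.fold min 0 a Finset.univ ≤ a i :=
  (((Finset.le_fold_min _).1 le_rfl).2) i (Finset.mem_univ i)

lemma tropNorm_nonneg (a : Fin n → ℝ) : 0 ≤ tropNorm a := by
  have := fold_max_nonneg a; have := fold_min_nonpos a
  unfold tropNorm; linarith

lemma fold_max_cases (s : Finset (Fin n)) (a : Fin n → ℝ) :
    s.fold max 0 a = 0 ∨ ∃ i, s.fold max 0 a = a i := by
  classical
  refine Finset.induction_on s ?_ ?_
  · left; simp
  · intro j s hj ih
    rw [Finset.fold_insert hj]
    rcases max_choice (a j) (s.fold max 0 a) with hc | hc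
    · right; exact ⟨j, hc⟩
    · rw [hc]; exact ih

lemma fold_min_cases (s : Finset (Fin n)) (a : Fin n → ℝ) :
    s.fold min 0 a = 0 ∨ ∃ i, s.fold min 0 a = a i := by
  classical
  refine Finset.induction_on s ?_ ?_
  · left; simp
  · intro j s hj ih
    rw [Finset.fold_insert hj]
    rcases min_choice (a j) (s.fold min 0 a) with hc | hc
    · right; exact ⟨j, hc⟩
    · rw [hc]; exact ih

lemma exists_coeff_max (a : Fin n → ℝ) :
    ∃ c : Fin n → ℝ, (∑ i, c i * a i = Finset.fold max 0 a Finset.univ) ∧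
      ∀ w : Fin n → ℝ,
        Finset.fold min 0 w Finset.univ ≤ ∑ i, c i * w i ∧
          ∑ i, c i * w i ≤ Finset.fold max 0 w Finset.univ := by
  classical
  rcases fold_max_cases Finset.univ a with h | ⟨i, h⟩
  · refine ⟨0, by simp [h], fun w => by simpa using ⟨fold_min_nonpos w, fold_max_nonneg w⟩⟩
  · refine ⟨fun k => if k = i then 1 else 0, ?_, fun w => ?_⟩
    · simp [ite_mul, Finset.sum_ite_eq', h]
    · simp only [ite_mul, one_mul, zero_mul, Finset.sum_ite_eq', Finset.mem_univ, if_true]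
      exact ⟨fold_min_le_apply w i, apply_le_fold_max w i⟩

lemma exists_coeff_min (a : Fin n → ℝ) :
    ∃ c : Fin n → ℝ, (∑ i, c i * a i = Finset.fold min 0 a Finset.univ) ∧
      ∀ w : Fin n → ℝ,
        Finset.fold min 0 w Finset.univ ≤ ∑ i, c i * w i ∧
          ∑ i, c i * w i ≤ Finset.fold max 0 w Finset.univ := by
  classical
  rcases fold_min_cases Finset.univ a with h | ⟨i, h⟩
  · refine ⟨0, by simp [h], fun w => by simpa using ⟨fold_min_nonpos w, fold_max_nonneg w⟩⟩
  · refine ⟨fun k => if k = i then 1 else 0, ?_, fun w => ?_⟩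
    · simp [ite_mul, Finset.sum_ite_eq', h]
    · simp only [ite_mul, one_mul, zero_mul, Finset.sum_ite_eq', Finset.mem_univ, if_true]
      exact ⟨fold_min_le_apply w i, apply_le_fold_max w i⟩

lemma tropNorm_exists_linear (a : Fin n → ℝ) :
    ∃ c : Fin n → ℝ, tropNorm a = ∑ i, c i * a i ∧
      ∀ w : Fin n → ℝ, |∑ i, c i * w i| ≤ tropNorm w := by
  obtain ⟨c₁, hc₁, hb₁⟩ := exists_coeff_max a
  obtain ⟨c₂, hc₂, hb₂⟩ := exists_coeff_min a
  refine ⟨c₁ - c₂, ?_, fun w => ?_⟩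
  · have : ∑ i, (c₁ - c₂) i * a i = (∑ i, c₁ i * a i) - ∑ i, c₂ i * a i := by
      rw [← Finset.sum_sub_distrib]; congr 1; ext i; simp [sub_mul]
    rw [this, hc₁, hc₂]; rfl
  · have hsplit : ∑ i, (c₁ - c₂) i * w i = (∑ i, c₁ i * w i) - ∑ i, c₂ i * w i := by
      rw [← Finset.sum_sub_distrib]; congr 1; ext i; simp [sub_mul]
    obtain ⟨h₁l, h₁u⟩ := hb₁ w
    obtain ⟨h₂l, h₂u⟩ := hb₂ w
    rw [hsplit, abs_le]
    unfold tropNorm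
    constructor <;> linarith

lemma fold_max_continuous (s : Finset (Fin n)) :
    Continuous fun a : Fin n → ℝ => s.fold max 0 a := by
  classical
  refine Finset.induction_on s ?_ ?_
  · simpa using continuous_const
  · intro j s hj ih
    have : (fun a : Fin n → ℝ => (insert j s).fold max 0 a)
        = fun a => max (a j) (s.fold max 0 a) := by
      ext a; rw [Finset.fold_insert hj]
    rw [this]
    exact (continuous_apply j).max ih

lemma fold_min_continuous (s : Finset (Fin n)) :
    Continuous fun a : Fin n → ℝ => s.fold min 0 a := by
  classical
  refine Finset.induction_on s ?_ ?_
  · simpa using continuous_const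
  · intro j s hj ih
    have : (fun a : Fin n → ℝ => (insert j s).fold min 0 a)
        = fun a => min (a j) (s.fold min 0 a) := by
      ext a; rw [Finset.fold_insert hj]
    rw [this]
    exact (continuous_apply j).min ih

lemma tropNorm_continuous : Continuous fun a : Fin n → ℝ => tropNorm a :=
  (fold_max_continuous Finset.univ).sub (fold_min_continuous Finset.univ)

lemma fold_max_neg (s : Finset (Fin n)) (a : Fin n → ℝ) :
    s.fold max 0 (fun i => -a i) = - s.fold min 0 a := by
  classical
  refine Finset.induction_on s ?_ ?_
  · simp
  · intro j s hj ih
    rw [Finset.fold_insert hj, Finset.fold_insert hj, ih, ← max_neg_neg]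

lemma fold_min_neg (s : Finset (Fin n)) (a : Fin n → ℝ) :
    s.fold min 0 (fun i => -a i) = - s.fold max 0 a := by
  classical
  refine Finset.induction_on s ?_ ?_
  · simp
  · intro j s hj ih
    rw [Finset.fold_insert hj, Finset.fold_insert hj, ih, ← min_neg_neg]

lemma tropNorm_neg (a : Fin n → ℝ) : tropNorm (-a) = tropNorm a := by
  unfold tropNorm
  have h1 : Finset.fold max 0 (-a) Finset.univ = - Finset.fold min 0 a Finset.univ :=
    fold_max_neg Finset.univ a
  have h2 : Finset.fold min 0 (-a) Finset.univ = - Finset.fold max 0 a Finset.univ :=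
    fold_min_neg Finset.univ a
  rw [h1, h2]; ring

/-- The fundamental inequality: length of path at least `tropNorm (x - y)`. -/
lemma tropNorm_le_integral (x y : Fin n → ℝ) (z : ℝ → Fin n → ℝ)
    (hz : ContDiff ℝ 1 z) (h0 : z 0 = x) (h1 : z 1 = y) :
    tropNorm (x - y) ≤ ∫ t in (0:ℝ)..1, tropNorm (deriv z t) := by
  obtain ⟨c, hca, hcb⟩ := tropNorm_exists_linear (x - y)
  have hdz : ∀ t : ℝ, HasDerivAt z (deriv z t) t := fun t =>
    ((hz.differentiable one_ne_zero) t).hasDerivAt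
  have hF : ∀ t : ℝ, HasDerivAt (fun t => ∑ i, c i * z t i)
      (∑ i, c i * deriv z t i) t := fun t =>
    HasDerivAt.fun_sum fun i _ => ((hasDerivAt_pi.1 (hdz t)) i).const_mul (c i)
  have hcontd : Continuous (deriv z) := hz.continuous_deriv le_rfl
  have hcontD : Continuous fun t => ∑ i, c i * deriv z t i := by
    refine continuous_finset_sum _ fun i _ => continuous_const.mul ?_
    exact (continuous_apply i).comp hcontd
  have hFTC : (∫ t in (0:ℝ)..1, ∑ i, c i * deriv z t i)
      = (∑ i, c i * y i) - (∑ i, c i * x i) := by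
    rw [intervalIntegral.integral_eq_sub_of_hasDerivAt (fun t _ => hF t)
      (hcontD.intervalIntegrable 0 1), h0, h1]
  have hkey : tropNorm (x - y) = ∫ t in (0:ℝ)..1, -(∑ i, c i * deriv z t i) := by
    rw [intervalIntegral.integral_neg, hFTC, hca, neg_sub, ← Finset.sum_sub_distrib]
    congr 1; ext i; simp [Pi.sub_apply, mul_sub]
  rw [hkey]
  refine intervalIntegral.integral_mono_on (by norm_num)
    (hcontD.neg.intervalIntegrable 0 1)
    ((tropNorm_continuous.comp hcontd).intervalIntegrable 0 1) fun t _ => ?_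
  exact (neg_le_abs _).trans (hcb (deriv z t))

instance : IsProbabilityMeasure (volume.restrict (Ioc (0:ℝ) 1)) :=
  ⟨by simp [Measure.restrict_apply_univ]⟩

/-- Jensen step: `∫ g ≤ (∫ g^p)^(1/p)` on `[0,1]`. -/
lemma integral_le_rpow_integral {g : ℝ → ℝ} (hg : Continuous g) (hg0 : ∀ t, 0 ≤ g t)
    {p : ℝ} (hp : 1 < p) :
    (∫ t in (0:ℝ)..1, g t) ≤ (∫ t in (0:ℝ)..1, g t ^ p) ^ (1 / p) := by
  have hp0 : 0 < p := lt_trans one_pos hp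
  have hgp : Continuous fun t => g t ^ p :=
    hg.rpow_const fun t => Or.inr hp0.le
  have hJ : (∫ t in Ioc (0:ℝ) 1, g t) ^ p ≤ ∫ t in Ioc (0:ℝ) 1, g t ^ p := by
    have := (convexOn_rpow hp.le).map_integral_le
      (μ := volume.restrict (Ioc (0:ℝ) 1)) (f := g)
      ((continuous_id.rpow_const fun u => Or.inr hp0.le).continuousOn) isClosed_Ici
      (Filter.Eventually.of_forall fun t => hg0 t)
      (hg.integrableOn_Ioc)
      (hgp.integrableOn_Ioc)
    exact this
  have hIoc1 : (∫ t in (0:ℝ)..1, g t) = ∫ t in Ioc (0:ℝ) 1, g t :=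
    intervalIntegral.integral_of_le (by norm_num)
  have hIoc2 : (∫ t in (0:ℝ)..1, g t ^ p) = ∫ t in Ioc (0:ℝ) 1, g t ^ p :=
    intervalIntegral.integral_of_le (by norm_num)
  have hg_int_nonneg : 0 ≤ ∫ t in Ioc (0:ℝ) 1, g t :=
    integral_nonneg fun t => hg0 t
  rw [hIoc1, hIoc2]
  calc (∫ t in Ioc (0:ℝ) 1, g t)
      = ((∫ t in Ioc (0:ℝ) 1, g t) ^ p) ^ (1 / p) := by
        rw [← Real.rpow_mul hg_int_nonneg, mul_one_div, div_self hp0.ne', Real.rpow_one]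
    _ ≤ (∫ t in Ioc (0:ℝ) 1, g t ^ p) ^ (1 / p) := by
        apply Real.rpow_le_rpow (Real.rpow_nonneg hg_int_nonneg p) hJ
        positivity

end aux

theorem tropical_p_length {n : ℕ} (p : ℝ) (hp : 1 < p) (x y : Fin n → ℝ) :
    (∀ z : ℝ → Fin n → ℝ, ContDiff ℝ 1 z → z 0 = x → z 1 = y →
        tropNorm (x - y)
          ≤ (∫ t in (0:ℝ)..1, tropNorm (deriv z t) ^ p) ^ (1 / p)) ∧
    sInf { r : ℝ | ∃ z : ℝ → Fin n → ℝ, ContDiff ℝ 1 z ∧ z 0 = x ∧ z 1 = y ∧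
        r = (∫ t in (0:ℝ)..1, tropNorm (deriv z t) ^ p) ^ (1 / p) }
      = tropNorm (x - y) := by
  have hp0 : 0 < p := lt_trans one_pos hp
  -- lower bound part
  have hineq : ∀ z : ℝ → Fin n → ℝ, ContDiff ℝ 1 z → z 0 = x → z 1 = y →
      tropNorm (x - y)
        ≤ (∫ t in (0:ℝ)..1, tropNorm (deriv z t) ^ p) ^ (1 / p) := by
    intro z hz h0 h1
    have hcontd : Continuous (deriv z) := hz.continuous_deriv le_rfl
    have hgc : Continuous fun t => tropNorm (deriv z t) :=
      tropNorm_continuous.comp hcontd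
    calc tropNorm (x - y) ≤ ∫ t in (0:ℝ)..1, tropNorm (deriv z t) :=
          tropNorm_le_integral x y z hz h0 h1
      _ ≤ (∫ t in (0:ℝ)..1, tropNorm (deriv z t) ^ p) ^ (1 / p) :=
          integral_le_rpow_integral hgc (fun t => tropNorm_nonneg _) hp
  refine ⟨hineq, ?_⟩
  -- the straight-line path
  set z₀ : ℝ → Fin n → ℝ := fun t i => x i + t * (y i - x i) with hz₀def
  have hz₀ : ContDiff ℝ 1 z₀ := by
    refine contDiff_pi.2 fun i => ?_
    exact contDiff_const.add (contDiff_id.mul contDiff_const)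
  have hz₀0 : z₀ 0 = x := by ext i; simp [hz₀def]
  have hz₀1 : z₀ 1 = y := by ext i; simp [hz₀def]
  have hderiv : ∀ t : ℝ, deriv z₀ t = y - x := by
    intro t
    have : HasDerivAt z₀ (y - x) t := by
      refine hasDerivAt_pi.2 fun i => ?_
      have : HasDerivAt (fun t : ℝ => x i + t * (y i - x i)) (y i - x i) t :=
        (hasDerivAt_mul_const (y i - x i)).const_add (x i)
      simpa [hz₀def] using this
    exact this.deriv
  have htn : tropNorm (y - x) = tropNorm (x - y) := by
    rw [show y - x = -(x - y) by ring, tropNorm_neg]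
  have hval : (∫ t in (0:ℝ)..1, tropNorm (deriv z₀ t) ^ p) ^ (1 / p)
      = tropNorm (x - y) := by
    have : (∫ t in (0:ℝ)..1, tropNorm (deriv z₀ t) ^ p)
        = tropNorm (x - y) ^ p := by
      have : ∀ t : ℝ, tropNorm (deriv z₀ t) ^ p = tropNorm (x - y) ^ p := by
        intro t; rw [hderiv t, htn]
      rw [intervalIntegral.integral_congr fun t _ => this t]
      simp
    rw [this, ← Real.rpow_mul (tropNorm_nonneg _), mul_one_div, div_self hp0.ne',
      Real.rpow_one]
  have hmem : tropNorm (x - y) ∈ { r : ℝ | ∃ z : ℝ → Fin n → ℝ, ContDiff ℝ 1 z ∧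
      z 0 = x ∧ z 1 = y ∧
      r = (∫ t in (0:ℝ)..1, tropNorm (deriv z t) ^ p) ^ (1 / p) } :=
    ⟨z₀, hz₀, hz₀0, hz₀1, hval.symm⟩
  refine le_antisymm (csInf_le ⟨tropNorm (x - y), ?_⟩ hmem) (le_csInf ⟨_, hmem⟩ ?_)
  · rintro r ⟨z, hz, h0, h1, rfl⟩
    exact hineq z hz h0 h1
  · rintro r ⟨z, hz, h0, h1, rfl⟩
    exact hineq z hz h0 h1
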